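/- Let X, Z : I → ℝ be C¹ with X nonvanishing derivative, let η, α, ζ, k be constants with ζ ≠ 0, k ≠ −1, and suppose Ż = e^u Ẋ and Z^{k+1}(X² + η X − α²) = ζ Ẋ². If one changes independent variable to v = e^u, then X as a function of v satisfies X'' − ((2X+η)/(2(X²+ηX−α²))) (X')² + (1/v) X' − ((k+1)/(2ζ^{1/(k+1)})) v^{(k−1)/(k+1)} (X²+ηX−α²)^{1/(k+1)} (X')^{2k/(k+1)} = 0, assuming X²+ηX−α² > 0, Ẋ > 0, Z > 0 and ζ > 0. -/

import Mathlib

private lemma key18 (k ζ z F p : ℝ) (hk1 : k+1 ≠ 0) (hζ : 0<ζ) (hz:0<z) (hF:0<F) (hp:0<p)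
    (h : z^(k+1) * F = ζ * p^2) :
    z^k * F / ζ = F^((1:ℝ)/(k+1)) * p^(2*k/(k+1)) / ζ^((1:ℝ)/(k+1)) := by
  have hlog : (k+1) * Real.log z + Real.log F = Real.log ζ + 2 * Real.log p := by
    have h' := congrArg Real.log h
    rw [Real.log_mul (by positivity) hF.ne', Real.log_rpow hz,
      Real.log_mul hζ.ne' (by positivity), Real.log_pow] at h'
    push_cast at h'
    linarith
  have hL : (0:ℝ) < z^k * F / ζ := by positivity
  have hR : (0:ℝ) < F^((1:ℝ)/(k+1)) * p^(2*k/(k+1)) / ζ^((1:ℝ)/(k+1)) := by positivity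
  rw [← Real.exp_log hL, ← Real.exp_log hR]
  congr 1
  rw [Real.log_div (by positivity) hζ.ne', Real.log_mul (by positivity) hF.ne',
    Real.log_rpow hz, Real.log_div (by positivity) (by positivity),
    Real.log_mul (by positivity) (by positivity), Real.log_rpow hF,
    Real.log_rpow hp, Real.log_rpow hζ]
  field_simp
  linear_combination k * hlog

/-- Passing from the first-order system `Ż = eᵘ Ẋ`, `Z^{k+1}(X²+ηX−α²) = ζẊ²`
to the second-order ODE (3.5) for `X` as a function of `v = eᵘ`. -/
theorem stmt18 (η α ζ k : ℝ) (hζ : 0 < ζ) (hk : k ≠ -1)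
    (X Z : ℝ → ℝ) (hX : ContDiff ℝ 2 X) (hZ : Differentiable ℝ Z)
    (h1 : ∀ u, deriv Z u = Real.exp u * deriv X u)
    (h2 : ∀ u, (Z u) ^ (k+1) * ((X u)^2 + η * X u - α^2) = ζ * (deriv X u)^2)
    (hpos1 : ∀ u, 0 < (X u)^2 + η * X u - α^2)
    (hpos2 : ∀ u, 0 < deriv X u) (hpos3 : ∀ u, 0 < Z u)
    (Y : ℝ → ℝ) (hY : ∀ v, Y v = X (Real.log v)) :
    ∀ v > (0:ℝ),
      deriv (deriv Y) v
      - (2 * Y v + η) / (2 * ((Y v)^2 + η * Y v - α^2)) * (deriv Y v)^2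
      + (1 / v) * deriv Y v
      - (k+1) / (2 * ζ ^ ((1:ℝ)/(k+1))) * v ^ ((k-1)/(k+1)) *
        ((Y v)^2 + η * Y v - α^2) ^ ((1:ℝ)/(k+1)) *
        (deriv Y v) ^ (2*k/(k+1)) = 0 := by
  have hk1 : k + 1 ≠ 0 := fun h => hk (by linarith)
  have hX1 : Differentiable ℝ X := hX.differentiable (by norm_num)
  have hX2 : Differentiable ℝ (deriv X) := by
    have h : ContDiff ℝ ((1:ℕ)+1) X := by exact_mod_cast hX
    exact (contDiff_succ_iff_deriv.mp h).2.2.differentiable (by norm_num)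
  have hYfun : Y = fun w => X (Real.log w) := funext hY
  have hdY : ∀ w, 0 < w → HasDerivAt Y (deriv X (Real.log w) * w⁻¹) w := by
    intro w hw
    rw [hYfun]
    exact (hX1 (Real.log w)).hasDerivAt.comp w (Real.hasDerivAt_log hw.ne')
  have hderivY : ∀ w, 0 < w → deriv Y w = deriv X (Real.log w) * w⁻¹ :=
    fun w hw => (hdY w hw).deriv
  intro v hv
  set u := Real.log v with hu
  have hvu : Real.exp u = v := Real.exp_log hv
  -- abbreviations
  set x := X u with hx
  set p := deriv X u with hpdef
  set q := deriv (deriv X) u with hqdef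
  set z := Z u with hzdef
  have hp : 0 < p := hpos2 u
  have hz : 0 < z := hpos3 u
  have hF : 0 < x^2 + η * x - α^2 := hpos1 u
  set F := x^2 + η * x - α^2 with hFdef
  -- second derivative of Y
  have hdd : deriv (deriv Y) v = q * v⁻¹ * v⁻¹ + p * (-(v^2)⁻¹) := by
    have hev : deriv Y =ᶠ[nhds v] fun w => deriv X (Real.log w) * w⁻¹ := by
      filter_upwards [eventually_gt_nhds hv] with w hw
      exact hderivY w hw
    rw [hev.deriv_eq]
    exact (((hX2 (Real.log v)).hasDerivAt.comp v (Real.hasDerivAt_log hv.ne')).mul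
      (hasDerivAt_inv hv.ne')).deriv
  -- differentiated constraint
  have hC : ((k+1) * z^k * deriv Z u) * F + z^(k+1) * ((2 * x + η) * p)
      = 2 * ζ * p * q := by
    have hL : HasDerivAt (fun u => (Z u) ^ (k+1) * ((X u)^2 + η * X u - α^2))
        (((k+1) * z^k * deriv Z u) * F + z^(k+1) * ((2 * x + η) * p)) u := by
      have := ((hZ u).hasDerivAt.rpow_const (p := k+1) (Or.inl (hpos3 u).ne')).mul
        ((((hX1 u).hasDerivAt.pow 2).add ((hX1 u).hasDerivAt.const_mul η)).sub_const (α^2))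
      refine this.congr_deriv ?_
      rw [show k+1-1 = k by ring]
      simp only [Pi.add_apply, Pi.pow_apply]
      push_cast
      ring
    have hR : HasDerivAt (fun u => ζ * (deriv X u)^2) (2 * ζ * p * q) u := by
      have := (((hX2 u).hasDerivAt.pow 2)).const_mul ζ
      refine this.congr_deriv ?_
      push_cast
      ring
    have h := hL.deriv
    rw [funext h2, hR.deriv] at h
    exact h.symm
  have hz' : deriv Z u = v * p := by rw [h1 u, hvu]
  rw [hz'] at hC
  have hC2 : ((k+1) * z^k * v * F + z^(k+1) * (2*x+η)) * p = (2 * ζ * q) * p := by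
    linear_combination hC
  have hC3 : (k+1) * z^k * v * F + z^(k+1) * (2*x+η) = 2 * ζ * q :=
    mul_right_cancel₀ hp.ne' hC2
  have hE : z^(k+1) * F = ζ * p^2 := h2 u
  -- rewrite the goal
  have hYv : Y v = x := hY v
  rw [hYv, hdd, hderivY v hv, ← hu, ← hpdef, ← hFdef]
  -- the rpow term
  have hkey := key18 k ζ z F p hk1 hζ hz hF hp hE
  have hterm : (k+1) / (2 * ζ ^ ((1:ℝ)/(k+1))) * v ^ ((k-1)/(k+1)) * F ^ ((1:ℝ)/(k+1)) *
      (p * v⁻¹) ^ (2*k/(k+1)) = (k+1)/2 * (z^k * F / ζ) * v⁻¹ := by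
    rw [Real.mul_rpow hp.le (inv_nonneg.mpr hv.le), Real.inv_rpow hv.le,
      ← Real.rpow_neg hv.le, hkey]
    have hva : v ^ ((k-1)/(k+1)) * v ^ (-(2*k/(k+1))) = v⁻¹ := by
      rw [← Real.rpow_add hv, show (k-1)/(k+1) + -(2*k/(k+1)) = -1 by
        field_simp; ring, Real.rpow_neg_one]
    rw [← hva]
    ring
  rw [hterm]
  have hqval : q = ((2*x+η)*p^2*ζ + (k+1)*z^k*F^2*v)/(2*ζ*F) := by
    rw [eq_div_iff (by positivity : (2*ζ*F) ≠ 0)]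
    linear_combination (-F)*hC3 + (2*x+η)*hE
  rw [hqval]
  field_simp
  ring
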